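/- Let θ, φ ∈ ℝ, let x ~ N(0,1), and given x let y be distributed as N(σ(θ-φ)x, σ(θ-φ)e^φ). Then the expected squared difference E[(x - y)²] equals σ(φ-θ)·(e^θ + σ(φ-θ)), where σ(a) = 1/(1+e^{-a}). -/

import Mathlib

open Real MeasureTheory

/-- Univariate normal density with mean `m` and variance `v`. -/
noncomputable def gaussianPDF (m v x : ℝ) : ℝ :=
  (Real.sqrt (2 * Real.pi * v))⁻¹ * Real.exp (-(x - m) ^ 2 / (2 * v))

/-- Sigmoid function. -/
noncomputable def sigmoid (a : ℝ) : ℝ := 1 / (1 + Real.exp (-a))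

lemma sq_mul_exp_integrable {b : ℝ} (hb : 0 < b) :
    Integrable fun x : ℝ => x ^ 2 * Real.exp (-b * x ^ 2) := by
  have h := integrable_rpow_mul_exp_neg_mul_sq hb (s := 2) (by norm_num)
  simpa [Real.rpow_two] using h

lemma odd_moment_zero (b : ℝ) : (∫ x : ℝ, x * Real.exp (-b * x ^ 2)) = 0 := by
  simp only [neg_mul]
  have h := integral_neg_eq_self (fun x : ℝ => x * Real.exp (-(b * x ^ 2))) volume
  simp only [neg_sq, neg_mul] at h
  rw [integral_neg] at h
  linarith

lemma sq_moment {b : ℝ} (hb : 0 < b) :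
    (∫ x : ℝ, x ^ 2 * Real.exp (-b * x ^ 2)) = Real.sqrt (π / b) / (2 * b) := by
  have hu : ∀ x : ℝ, HasDerivAt (fun x : ℝ => x) 1 x := fun x => hasDerivAt_id x
  have hv : ∀ x : ℝ, HasDerivAt (fun x : ℝ => -(2 * b)⁻¹ * Real.exp (-b * x ^ 2))
      (x * Real.exp (-b * x ^ 2)) x := by
    intro x
    have h1 : HasDerivAt (fun x : ℝ => -b * x ^ 2) (-b * (2 * x)) x := by
      simpa using ((hasDerivAt_pow 2 x).const_mul (-b))
    have h2 := (h1.exp).const_mul (-(2 * b)⁻¹)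
    refine h2.congr_deriv ?_
    have hinv : (2 * b)⁻¹ * (2 * b) = 1 := inv_mul_cancel₀ (by positivity)
    linear_combination (x * Real.exp (-b * x ^ 2)) * hinv
  have huv' : Integrable (fun x : ℝ => x * (x * Real.exp (-b * x ^ 2))) := by
    have := sq_mul_exp_integrable hb
    refine this.congr ?_
    filter_upwards with x; ring
  have hu'v : Integrable (fun x : ℝ => (1 : ℝ) * (-(2 * b)⁻¹ * Real.exp (-b * x ^ 2))) := by
    have := (integrable_exp_neg_mul_sq hb).const_mul (-(2 * b)⁻¹)
    refine this.congr ?_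
    filter_upwards with x; ring
  have huv : Integrable (fun x : ℝ => x * (-(2 * b)⁻¹ * Real.exp (-b * x ^ 2))) := by
    have := (integrable_mul_exp_neg_mul_sq hb).const_mul (-(2 * b)⁻¹)
    refine this.congr ?_
    filter_upwards with x; ring
  have key := integral_mul_deriv_eq_deriv_mul_of_integrable (fun x _ => hu x) (fun x _ => hv x)
    (by simpa [Pi.mul_def] using huv') (by simpa [Pi.mul_def] using hu'v)
    (by simpa [Pi.mul_def] using huv)
  have h1 : (∫ x : ℝ, x * (x * Real.exp (-b * x ^ 2)))
      = ∫ x : ℝ, x ^ 2 * Real.exp (-b * x ^ 2) := by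
    congr 1; funext x; ring
  have h2 : (∫ x : ℝ, (1 : ℝ) * (-(2 * b)⁻¹ * Real.exp (-b * x ^ 2)))
      = -(2 * b)⁻¹ * ∫ x : ℝ, Real.exp (-b * x ^ 2) := by
    rw [← integral_const_mul]
    congr 1; funext x; ring
  rw [h1, h2, integral_gaussian] at key
  rw [key, div_eq_mul_inv]
  ring

/-- Second moment form of the Gaussian integral: the key inner computation. -/
lemma gaussian_quad (m : ℝ) {v : ℝ} (hv : 0 < v) (x : ℝ) :
    (∫ y : ℝ, (x - y) ^ 2 * gaussianPDF m v y) = (x - m) ^ 2 + v := by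
  set b : ℝ := (2 * v)⁻¹ with hb_def
  have hb : 0 < b := by positivity
  set c : ℝ := (Real.sqrt (2 * π * v))⁻¹ with hc_def
  have hrw : ∀ y : ℝ, (x - y) ^ 2 * gaussianPDF m v y
      = (fun z => (x - m - z) ^ 2 * (c * Real.exp (-b * z ^ 2))) (y - m) := by
    intro y
    simp only [gaussianPDF]
    rw [← hc_def]
    have : -(y - m) ^ 2 / (2 * v) = -b * (y - m) ^ 2 := by
      rw [hb_def]; field_simp
    rw [this]
    ring_nf
  calc (∫ y : ℝ, (x - y) ^ 2 * gaussianPDF m v y)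
      = ∫ y : ℝ, (fun z => (x - m - z) ^ 2 * (c * Real.exp (-b * z ^ 2))) (y - m) := by
        congr 1; funext y; exact hrw y
    _ = ∫ z : ℝ, (x - m - z) ^ 2 * (c * Real.exp (-b * z ^ 2)) :=
        integral_sub_right_eq_self (fun z => (x - m - z) ^ 2 * (c * Real.exp (-b * z ^ 2))) m
    _ = ∫ z : ℝ, (c * (x - m) ^ 2) * Real.exp (-b * z ^ 2)
          + ((-2 * c * (x - m)) * (z * Real.exp (-b * z ^ 2))
             + c * (z ^ 2 * Real.exp (-b * z ^ 2))) := by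
        congr 1; funext z; ring
    _ = (c * (x - m) ^ 2) * (∫ z : ℝ, Real.exp (-b * z ^ 2))
          + ((-2 * c * (x - m)) * (∫ z : ℝ, z * Real.exp (-b * z ^ 2))
             + c * (∫ z : ℝ, z ^ 2 * Real.exp (-b * z ^ 2))) := by
        rw [integral_add, integral_add, integral_const_mul, integral_const_mul,
          integral_const_mul]
        · exact ((integrable_mul_exp_neg_mul_sq hb).const_mul _)
        · exact ((sq_mul_exp_integrable hb).const_mul _)
        · exact ((integrable_exp_neg_mul_sq hb).const_mul _)
        · exact (((integrable_mul_exp_neg_mul_sq hb).const_mul _).add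
            ((sq_mul_exp_integrable hb).const_mul _))
    _ = (x - m) ^ 2 + v := by
        rw [integral_gaussian, odd_moment_zero, sq_moment hb]
        have hπb : π / b = 2 * π * v := by
          rw [hb_def]; field_simp
        have hsqrt : Real.sqrt (2 * π * v) ≠ 0 := by
          have : (0:ℝ) < 2 * π * v := by positivity
          positivity
        have hcs : c * Real.sqrt (π / b) = 1 := by
          rw [hπb, hc_def, inv_mul_cancel₀ hsqrt]
        have h2b : (2 * b)⁻¹ = v := by
          rw [hb_def]; field_simp
        have : c * (Real.sqrt (π / b) / (2 * b)) = v := by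
          rw [div_eq_mul_inv, ← mul_assoc, hcs, one_mul, h2b]
        linear_combination (x - m) ^ 2 * hcs + this

lemma sigmoid_pos (a : ℝ) : 0 < _root_.sigmoid a := by
  unfold _root_.sigmoid; positivity

lemma one_sub_sigmoid (a : ℝ) : 1 - _root_.sigmoid a = _root_.sigmoid (-a) := by
  unfold _root_.sigmoid
  have h1 : (0:ℝ) < 1 + Real.exp (-a) := by positivity
  have h2 : (0:ℝ) < 1 + Real.exp a := by positivity
  rw [neg_neg]
  field_simp
  have he : Real.exp (-a) * Real.exp a = 1 := by
    rw [← Real.exp_add, neg_add_cancel, Real.exp_zero]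
  linear_combination he

theorem forward_ct_cost_eq (θ φ : ℝ) :
    (∫ x : ℝ, gaussianPDF 0 1 x *
        ∫ y : ℝ, (x - y) ^ 2 *
          gaussianPDF (_root_.sigmoid (θ - φ) * x) (_root_.sigmoid (θ - φ) * Real.exp φ) y) =
      _root_.sigmoid (φ - θ) * (Real.exp θ + _root_.sigmoid (φ - θ)) := by
  set s : ℝ := _root_.sigmoid (θ - φ) with hs_def
  have hs : 0 < s := _root_.sigmoid_pos _
  have hv : 0 < s * Real.exp φ := by positivity
  have hinner : ∀ x : ℝ, (∫ y : ℝ, (x - y) ^ 2 *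
      gaussianPDF (s * x) (s * Real.exp φ) y) = (x - s * x) ^ 2 + s * Real.exp φ :=
    fun x => gaussian_quad (s * x) hv x
  have hb : (0:ℝ) < (2:ℝ)⁻¹ := by norm_num
  have hstep : (∫ x : ℝ, gaussianPDF 0 1 x *
      ((x - s * x) ^ 2 + s * Real.exp φ)) = (1 - s) ^ 2 + s * Real.exp φ := by
    set c : ℝ := (Real.sqrt (2 * π * 1))⁻¹ with hc_def
    have hrw : ∀ x : ℝ, gaussianPDF 0 1 x * ((x - s * x) ^ 2 + s * Real.exp φ)
        = (c * (1 - s) ^ 2) * (x ^ 2 * Real.exp (-(2:ℝ)⁻¹ * x ^ 2))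
          + (c * (s * Real.exp φ)) * Real.exp (-(2:ℝ)⁻¹ * x ^ 2) := by
      intro x
      simp only [gaussianPDF]
      have : -(x - 0) ^ 2 / (2 * 1) = -(2:ℝ)⁻¹ * x ^ 2 := by ring
      rw [this]
      ring
    calc (∫ x : ℝ, gaussianPDF 0 1 x * ((x - s * x) ^ 2 + s * Real.exp φ))
        = ∫ x : ℝ, (c * (1 - s) ^ 2) * (x ^ 2 * Real.exp (-(2:ℝ)⁻¹ * x ^ 2))
            + (c * (s * Real.exp φ)) * Real.exp (-(2:ℝ)⁻¹ * x ^ 2) := by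
          congr 1; funext x; exact hrw x
      _ = (c * (1 - s) ^ 2) * (∫ x : ℝ, x ^ 2 * Real.exp (-(2:ℝ)⁻¹ * x ^ 2))
            + (c * (s * Real.exp φ)) * (∫ x : ℝ, Real.exp (-(2:ℝ)⁻¹ * x ^ 2)) := by
          rw [integral_add, integral_const_mul, integral_const_mul]
          · exact ((sq_mul_exp_integrable hb).const_mul _)
          · exact ((integrable_exp_neg_mul_sq hb).const_mul _)
      _ = (1 - s) ^ 2 + s * Real.exp φ := by
          rw [sq_moment hb, integral_gaussian]
          have hπ : π / (2:ℝ)⁻¹ = 2 * π * 1 := by field_simp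
          have hsqrt : Real.sqrt (2 * π * 1) ≠ 0 := by
            have : (0:ℝ) < 2 * π * 1 := by positivity
            positivity
          have hcs : c * Real.sqrt (π / (2:ℝ)⁻¹) = 1 := by
            rw [hπ, hc_def, inv_mul_cancel₀ hsqrt]
          have h2b : ((2:ℝ) * (2:ℝ)⁻¹) = 1 := by norm_num
          calc c * (1 - s) ^ 2 * (Real.sqrt (π / (2:ℝ)⁻¹) / (2 * (2:ℝ)⁻¹))
                + c * (s * Real.exp φ) * Real.sqrt (π / (2:ℝ)⁻¹)
              = (c * Real.sqrt (π / (2:ℝ)⁻¹)) * ((1 - s) ^ 2 / (2 * (2:ℝ)⁻¹))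
                + (c * Real.sqrt (π / (2:ℝ)⁻¹)) * (s * Real.exp φ) := by ring
            _ = (1 - s) ^ 2 + s * Real.exp φ := by
                rw [hcs, h2b]; ring
  have hmain : (∫ x : ℝ, gaussianPDF 0 1 x *
      ∫ y : ℝ, (x - y) ^ 2 * gaussianPDF (s * x) (s * Real.exp φ) y)
      = (1 - s) ^ 2 + s * Real.exp φ := by
    rw [← hstep]
    congr 1; funext x; rw [hinner x]
  rw [hmain]
  -- Now the algebra: (1 - s)^2 + s e^φ = σ' (e^θ + σ') where σ' = sigmoid (φ - θ)
  have h1s : 1 - s = _root_.sigmoid (φ - θ) := by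
    rw [hs_def, _root_.one_sub_sigmoid, neg_sub]
  have hse : s * Real.exp φ = _root_.sigmoid (φ - θ) * Real.exp θ := by
    rw [hs_def]
    unfold _root_.sigmoid
    have h1 : (0:ℝ) < 1 + Real.exp (-(θ - φ)) := by positivity
    have h2 : (0:ℝ) < 1 + Real.exp (-(φ - θ)) := by positivity
    field_simp
    have ha : Real.exp φ * Real.exp (-(φ - θ)) = Real.exp θ := by
      rw [← Real.exp_add]; ring_nf
    have hb' : Real.exp (-(θ - φ)) * Real.exp θ = Real.exp φ := by
      rw [← Real.exp_add]; ring_nf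
    linear_combination ha - hb'
  rw [h1s, hse]
  ring
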